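/- Let T be the theory with rules E(x,y) ⇒ ∃z E(y,z) and R(x,y) ∧ E(x,x') ∧ E(y,z) ∧ E(z,y') ⇒ R(x',y'), and let D = {E(a_0,a_1), R(a_0,a_0)}. Then Chase(D,T) is the infinite E-chain a_0, a_1, a_2, … with exactly the atoms R(a_i, a_{2i}); in particular Chase(D,T) ⊭ ∃x∃y (E(x,y) ∧ R(y,y)). However, every finite model M of T and D satisfies ∃x∃y (E(x,y) ∧ R(y,y)). Hence T is not finitely controllable. -/

import Mathlib

namespace ChaseFW

/-- A signature of binary relation symbols. -/
structure Sig where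
  Rel : Type

/-- A single-head existential TGD `Φ(x̄) ⇒ ∃z head(x_yvar, z)`: the witness is
the second argument of the head predicate. -/
structure TGD (σ : Sig) where
  k : ℕ
  body : List (σ.Rel × Fin k × Fin k)
  yvar : Fin k
  head : σ.Rel

/-- A plain datalog rule `Φ(x̄) ⇒ headR(x_h1, x_h2)`. -/
structure DLog (σ : Sig) where
  k : ℕ
  body : List (σ.Rel × Fin k × Fin k)
  headR : σ.Rel
  h1 : Fin k
  h2 : Fin k

/-- A theory: existential TGDs and plain datalog rules. -/
structure Theory (σ : Sig) where
  tgds : Set (TGD σ)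
  dls : Set (DLog σ)

/-- Elements of the chase: constants of the database, and witnesses
`c_{t, x̄}` created by a TGD `t` applied to a tuple `x̄`. -/
inductive Elem (σ : Sig) (α : Type) where
  | base : α → Elem σ α
  | wit : TGD σ → List (Elem σ α) → Elem σ α

/-- A database instance: a set of ground atoms. -/
abbrev Inst (σ : Sig) (α : Type) := Set (σ.Rel × Elem σ α × Elem σ α)

variable {σ : Sig} {α : Type}

def satBody (I : Inst σ α) {k : ℕ} (body : List (σ.Rel × Fin k × Fin k))
    (v : Fin k → Elem σ α) : Prop :=
  ∀ a ∈ body, (a.1, v a.2.1, v a.2.2) ∈ I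

/-- One step of the non-oblivious chase: apply all datalog rules, and create a
fresh witness for each TGD and tuple satisfying its body for which no witness
already exists. -/
def step (T : Theory σ) (I : Inst σ α) : Inst σ α :=
  I ∪ {g | ∃ d ∈ T.dls, ∃ v : Fin d.k → Elem σ α,
        satBody I d.body v ∧ g = (d.headR, v d.h1, v d.h2)}
    ∪ {g | ∃ t ∈ T.tgds, ∃ v : Fin t.k → Elem σ α,
        satBody I t.body v ∧ (¬ ∃ z, (t.head, v t.yvar, z) ∈ I) ∧
        g = (t.head, v t.yvar, Elem.wit t (List.ofFn v))}

/-- `Chase^n(D, T)`. -/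
def chaseN (T : Theory σ) (D : Inst σ α) : ℕ → Inst σ α
  | 0 => D
  | n + 1 => step T (chaseN T D n)

/-- `Chase(D, T) = ⋃ n, Chase^n(D, T)`. -/
def chase (T : Theory σ) (D : Inst σ α) : Inst σ α := ⋃ n, chaseN T D n

/-- The set of elements (the domain) of an instance. -/
def elems (I : Inst σ α) : Set (Elem σ α) :=
  {e | ∃ g ∈ I, g.2.1 = e ∨ g.2.2 = e}

/-- Tuple generating predicates: those occurring in the head of some TGD. -/
def isTGP (T : Theory σ) (R : σ.Rel) : Prop := ∃ t ∈ T.tgds, t.head = R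

/-- The skeleton of `Chase(D,T)`: all atoms of `D` and all TGP atoms. -/
def skeleton (T : Theory σ) (D : Inst σ α) : Inst σ α :=
  D ∪ {g ∈ chase T D | isTGP T g.1}

/-- All elements of the database are constants. -/
def baseOnly (D : Inst σ α) : Prop :=
  ∀ g ∈ D, (∃ a, g.2.1 = Elem.base a) ∧ (∃ a, g.2.2 = Elem.base a)

/-- No TGP occurs in the head of a datalog rule. -/
def sep (T : Theory σ) : Prop := ∀ d ∈ T.dls, ¬ isTGP T d.headR

/-- Non-constant elements of the chase. -/
def nonBase : Elem σ α → Prop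
  | .base _ => False
  | .wit _ _ => True

end ChaseFW

open ChaseFW

/-- The two relation symbols `E` and `R`. -/
inductive RS where
  | E : RS
  | R : RS

def sig18 : ChaseFW.Sig := ⟨RS⟩

/-- `E(x,y) ⇒ ∃z E(y,z)`. -/
def tgd18 : TGD sig18 := ⟨2, [(RS.E, 0, 1)], 1, RS.E⟩

/-- `R(x,y) ∧ E(x,x') ∧ E(y,z) ∧ E(z,y') ⇒ R(x',y')`
(variables `x y x' z y'` numbered `0 1 2 3 4`). -/
def dl18 : DLog sig18 := ⟨5, [(RS.R, 0, 1), (RS.E, 0, 2), (RS.E, 1, 3), (RS.E, 3, 4)], RS.R, 2, 4⟩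

def T18 : Theory sig18 := ⟨{tgd18}, {dl18}⟩

/-- `D = {E(a_0,a_1), R(a_0,a_0)}`. -/
def D18 : Inst sig18 (Fin 2) :=
  {(RS.E, Elem.base 0, Elem.base 1), (RS.R, Elem.base 0, Elem.base 0)}

/-- A model of a theory of TGDs and datalog rules. -/
structure TModel (σ : ChaseFW.Sig) where
  Dom : Type
  rel : σ.Rel → Dom → Dom → Prop

def TModel.satT {σ : ChaseFW.Sig} (M : TModel σ) (T : Theory σ) : Prop :=
  (∀ t ∈ T.tgds, ∀ v : Fin t.k → M.Dom,
    (∀ a ∈ t.body, M.rel a.1 (v a.2.1) (v a.2.2)) →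
    ∃ z, M.rel t.head (v t.yvar) z) ∧
  (∀ d ∈ T.dls, ∀ v : Fin d.k → M.Dom,
    (∀ a ∈ d.body, M.rel a.1 (v a.2.1) (v a.2.2)) →
    M.rel d.headR (v d.h1) (v d.h2))

section Aux

/-- The chain of chase elements. -/
def ff : ℕ → Elem sig18 (Fin 2)
  | 0 => Elem.base 0
  | 1 => Elem.base 1
  | (n+2) => Elem.wit tgd18 [ff n, ff (n+1)]

def ht : Elem sig18 (Fin 2) → ℕ
  | .base a => a.val
  | .wit _ (_ :: b :: _) => ht b + 1
  | .wit _ [] => 0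
  | .wit _ [_] => 0

lemma ht_ff : ∀ n, ht (ff n) = n
  | 0 => rfl
  | 1 => rfl
  | (n+2) => by simp [ff, ht, ht_ff (n+1)]

lemma ff_inj : Function.Injective ff := fun a b h => by
  have := ht_ff a; rw [h, ht_ff] at this; omega

/-- explicit description of the chase levels -/
def S (n : ℕ) : Inst sig18 (Fin 2) :=
  {g | ∃ i ≤ n, g = (RS.E, ff i, ff (i+1))} ∪
  {g | ∃ i, 2*i ≤ n ∧ g = (RS.R, ff i, ff (2*i))}

lemma E_mem_S {x y : Elem sig18 (Fin 2)} {n : ℕ} (h : (RS.E, x, y) ∈ S n) :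
    ∃ i ≤ n, x = ff i ∧ y = ff (i+1) := by
  rcases h with ⟨i, hi, he⟩ | ⟨i, hi, he⟩
  · obtain ⟨_, h1, h2⟩ := Prod.mk.injEq .. ▸ he
    exact ⟨i, hi, by simp_all⟩
  · cases congrArg Prod.fst he

lemma R_mem_S {x y : Elem sig18 (Fin 2)} {n : ℕ} (h : (RS.R, x, y) ∈ S n) :
    ∃ i, 2*i ≤ n ∧ x = ff i ∧ y = ff (2*i) := by
  rcases h with ⟨i, hi, he⟩ | ⟨i, hi, he⟩
  · cases congrArg Prod.fst he
  · obtain ⟨_, h1, h2⟩ := Prod.mk.injEq .. ▸ he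
    exact ⟨i, hi, by simp_all⟩

lemma mem4_aux {β : Type} {a x1 x2 x3 x4 : β} (h : a ∈ [x1, x2, x3, x4]) :
    a = x1 ∨ a = x2 ∨ a = x3 ∨ a = x4 := by
  simpa using h

lemma mem_S_E {n i : ℕ} (hi : i ≤ n) : (RS.E, ff i, ff (i+1)) ∈ S n :=
  Or.inl ⟨i, hi, rfl⟩

lemma mem_S_R {n i : ℕ} (hi : 2*i ≤ n) : (RS.R, ff i, ff (2*i)) ∈ S n :=
  Or.inr ⟨i, hi, rfl⟩

lemma S_zero : D18 = S 0 := by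
  ext g
  constructor
  · rintro (rfl | rfl)
    · exact mem_S_E (le_refl 0)
    · exact mem_S_R (i := 0) (by omega)
  · rintro (⟨i, hi, rfl⟩ | ⟨i, hi, rfl⟩)
    · interval_cases i
      exact Or.inl rfl
    · have : i = 0 := by omega
      subst this
      exact Or.inr rfl

lemma S_step (n : ℕ) : step T18 (S n) = S (n+1) := by
  ext g
  constructor
  · rintro ((hg | hg) | hg)
    · rcases hg with ⟨i, hi, rfl⟩ | ⟨i, hi, rfl⟩
      · exact mem_S_E (by omega)
      · exact mem_S_R (by omega)
    · obtain ⟨d, hd, v, hb, rfl⟩ := hg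
      obtain rfl : d = dl18 := hd
      have h1 : (RS.R, v (0 : Fin 5), v (1 : Fin 5)) ∈ S n :=
        hb ((RS.R, 0, 1) : RS × Fin 5 × Fin 5) (List.Mem.head _)
      have h2 : (RS.E, v (0 : Fin 5), v (2 : Fin 5)) ∈ S n :=
        hb ((RS.E, 0, 2) : RS × Fin 5 × Fin 5) (.tail _ (.head _))
      have h3 : (RS.E, v (1 : Fin 5), v (3 : Fin 5)) ∈ S n :=
        hb ((RS.E, 1, 3) : RS × Fin 5 × Fin 5) (.tail _ (.tail _ (.head _)))
      have h4 : (RS.E, v (3 : Fin 5), v (4 : Fin 5)) ∈ S n :=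
        hb ((RS.E, 3, 4) : RS × Fin 5 × Fin 5) (.tail _ (.tail _ (.tail _ (.head _))))
      obtain ⟨i, hi, e0, e1⟩ := R_mem_S h1
      obtain ⟨j2, hj2, e0', e2⟩ := E_mem_S h2
      have hji2 : j2 = i := ff_inj (e0' ▸ e0)
      obtain ⟨j3, hj3, e1', e3⟩ := E_mem_S h3
      have hji3 : j3 = 2*i := ff_inj (e1' ▸ e1)
      obtain ⟨j4, hj4, e3', e4⟩ := E_mem_S h4
      rw [hji3] at e3
      have hji4 : j4 = 2*i+1 := ff_inj (e3' ▸ e3)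
      rw [hji2] at e2
      rw [hji4] at e4
      show (RS.R, v (2 : Fin 5), v (4 : Fin 5)) ∈ S (n+1)
      rw [e2, e4]
      have h2i : (2*i+1)+1 = 2*(i+1) := by omega
      rw [h2i]
      exact mem_S_R (i := i+1) (by omega)
    · obtain ⟨t, ht, v, hb, hno, rfl⟩ := hg
      obtain rfl : t = tgd18 := ht
      have h1 : (RS.E, v (0 : Fin 2), v (1 : Fin 2)) ∈ S n :=
        hb ((RS.E, 0, 1) : RS × Fin 2 × Fin 2) (List.Mem.head _)
      obtain ⟨j, hj, e0, e1⟩ := E_mem_S h1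
      have hv1 : v tgd18.yvar = v (1 : Fin 2) := rfl
      have hjn : j = n := by
        by_contra hne
        exact hno ⟨ff (j+2), by rw [hv1, e1]; exact mem_S_E (by omega)⟩
      subst hjn
      show (RS.E, v (1 : Fin 2), Elem.wit tgd18 (List.ofFn v)) ∈ S (j+1)
      have hofn : List.ofFn v = [v (0 : Fin 2), v (1 : Fin 2)] := by
        rfl
      rw [e1, hofn, e0, e1]
      exact mem_S_E (i := j+1) (le_refl _)
  · rintro (⟨i, hi, rfl⟩ | ⟨i, hi, rfl⟩)
    · rcases Nat.lt_or_ge i (n+1) with h | h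
      · exact Or.inl (Or.inl (mem_S_E (by omega)))
      · obtain rfl : i = n+1 := by omega
        refine Or.inr ⟨tgd18, rfl,
          (fun i : Fin 2 => [ff n, ff (n+1)].get i), ?_, ?_, ?_⟩
        · rintro a ha
          simp only [tgd18, List.mem_singleton] at ha
          obtain rfl := List.mem_singleton.mp ha
          exact mem_S_E (le_refl n)
        · rintro ⟨z, hz⟩
          have hz' : (RS.E, ff (n+1), z) ∈ S n := hz
          obtain ⟨j, hj, ej, _⟩ := E_mem_S hz'
          have : j = n+1 := ff_inj ej.symm
          omega
        · show (RS.E, ff (n+1), ff (n+1+1)) =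
            (RS.E, ff (n+1), Elem.wit tgd18 (List.ofFn _))
          have hofn : List.ofFn (fun i : Fin 2 => [ff n, ff (n+1)].get i) =
              [ff n, ff (n+1)] := by
            simp [List.ofFn_succ]
          exact congrArg (fun l => (RS.E, ff (n+1), Elem.wit tgd18 l)) hofn.symm
    · rcases Nat.lt_or_ge (2*i) (n+1) with h | h
      · exact Or.inl (Or.inl (mem_S_R (by omega)))
      · have h2i : 2*i = n+1 := by omega
        obtain ⟨j, rfl⟩ : ∃ j, i = j+1 := ⟨i-1, by omega⟩
        refine Or.inl (Or.inr ⟨dl18, rfl,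
          (fun i : Fin 5 =>
            [ff j, ff (2*j), ff (j+1), ff (2*j+1), ff (2*j+2)].get i), ?_, ?_⟩)
        · rintro a ha
          simp only [dl18, List.mem_cons, List.mem_singleton,
            List.not_mem_nil, or_false] at ha
          rcases mem4_aux ha with rfl | rfl | rfl | rfl
          · show (RS.R, ff j, ff (2*j)) ∈ S n
            exact mem_S_R (by omega)
          · show (RS.E, ff j, ff (j+1)) ∈ S n
            exact mem_S_E (by omega)
          · show (RS.E, ff (2*j), ff (2*j+1)) ∈ S n
            exact mem_S_E (i := 2*j) (by omega)
          · show (RS.E, ff (2*j+1), ff (2*j+2)) ∈ S n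
            exact mem_S_E (i := 2*j+1) (by omega)
        · rfl

lemma chaseN_eq : ∀ n, chaseN T18 D18 n = S n
  | 0 => S_zero
  | (n+1) => by rw [chaseN, chaseN_eq n, S_step]

lemma chase_eq : chase T18 D18 =
    {g | ∃ i : ℕ, g = (RS.E, ff i, ff (i + 1))} ∪
    {g | ∃ i : ℕ, g = (RS.R, ff i, ff (2 * i))} := by
  ext g
  simp only [chase, Set.mem_iUnion, chaseN_eq]
  constructor
  · rintro ⟨n, (⟨i, hi, rfl⟩ | ⟨i, hi, rfl⟩)⟩
    · exact Or.inl ⟨i, rfl⟩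
    · exact Or.inr ⟨i, rfl⟩
  · rintro (⟨i, rfl⟩ | ⟨i, rfl⟩)
    · exact ⟨i, mem_S_E (le_refl i)⟩
    · exact ⟨2*i, mem_S_R (le_refl _)⟩

lemma no_query : ¬ ∃ x y : Elem sig18 (Fin 2),
    (RS.E, x, y) ∈ chase T18 D18 ∧ (RS.R, y, y) ∈ chase T18 D18 := by
  rintro ⟨x, y, hE, hR⟩
  rw [chase_eq] at hE hR
  rcases hR with ⟨i, hi⟩ | ⟨i, hi⟩
  · simp at hi
  · obtain ⟨h1, h2⟩ : y = ff i ∧ y = ff (2*i) := by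
      simpa [Prod.ext_iff] using hi
    have : i = 2*i := ff_inj (h1.symm.trans h2)
    have hi0 : i = 0 := by omega
    subst hi0
    rcases hE with ⟨j, hj⟩ | ⟨j, hj⟩
    · obtain ⟨h3, h4⟩ : x = ff j ∧ y = ff (j+1) := by
        simpa [Prod.ext_iff] using hj
      have : j + 1 = 0 := ff_inj (h4.symm.trans h1)
      omega
    · simp at hj

lemma finite_model (M : TModel sig18) (hfin : Finite M.Dom) (hsat : M.satT T18)
    (a0 a1 : M.Dom) (hE : M.rel RS.E a0 a1) (hR : M.rel RS.R a0 a0) :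
    ∃ x y : M.Dom, M.rel RS.E x y ∧ M.rel RS.R y y := by
  classical
  obtain ⟨htgd, hdl⟩ := hsat
  have tgdE : ∀ x y, M.rel RS.E x y → ∃ z, M.rel RS.E y z := by
    intro x y h
    have := htgd tgd18 rfl (fun i : Fin 2 => [x, y].get i) ?_
    · exact this
    · rintro a ha
      simp only [tgd18, List.mem_singleton] at ha
      obtain rfl := List.mem_singleton.mp ha
      exact h
  have dlR : ∀ x y x' z y', M.rel RS.R x y → M.rel RS.E x x' →
      M.rel RS.E y z → M.rel RS.E z y' → M.rel RS.R x' y' := by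
    intro x y x' z y' h1 h2 h3 h4
    have := hdl dl18 rfl (fun i : Fin 5 => [x, y, x', z, y'].get i) ?_
    · exact this
    · rintro a ha
      simp only [dl18, List.mem_cons, List.mem_singleton,
        List.not_mem_nil, or_false] at ha
      rcases mem4_aux ha with rfl | rfl | rfl | rfl <;> assumption
  set succ : M.Dom → M.Dom := fun y =>
    if h : ∃ z, M.rel RS.E y z then h.choose else y with hsucc
  have succE : ∀ y, (∃ z, M.rel RS.E y z) → M.rel RS.E y (succ y) := by
    intro y hy
    rw [hsucc]
    simp only [dif_pos hy]
    exact hy.choose_spec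
  let b : ℕ → M.Dom := fun n => Nat.rec a1 (fun _ prev => succ prev) n
  have bsucc : ∀ n, b (n+1) = succ (b n) := fun n => rfl
  have Eb : ∀ n, M.rel RS.E (b n) (b (n+1)) := by
    intro n
    induction n with
    | zero => exact succE a1 (tgdE a0 a1 hE)
    | succ n ih => exact succE _ (tgdE _ _ ih)
  have Rb : ∀ k, M.rel RS.R (b k) (b (2*k+1)) := by
    intro k
    induction k with
    | zero => exact dlR a0 a0 (b 0) (b 0) (b 1) hR hE hE (Eb 0)
    | succ k ih =>
      have : M.rel RS.R (b (k+1)) (b (2*k+3)) :=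
        dlR (b k) (b (2*k+1)) (b (k+1)) (b (2*k+2)) (b (2*k+3))
          ih (Eb k) (Eb (2*k+1)) (Eb (2*k+2))
      have h23 : 2*(k+1)+1 = 2*k+3 := by omega
      rw [h23]
      exact this
  -- pigeonhole
  obtain ⟨s, t, hst, hbst⟩ := Finite.exists_ne_map_eq_of_infinite b
  wlog hlt : s < t generalizing s t
  · exact this t s hst.symm hbst.symm (by omega)
  set m := s with hm
  set p := t - s with hp
  have hppos : 0 < p := by omega
  have det : ∀ j, b (m + j) = b (m + p + j) := by
    intro j
    induction j with
    | zero => simpa using (by rw [show m + p = t from by omega]; exact hbst)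
    | succ j ih =>
      have e1 : m + (j+1) = (m + j) + 1 := by omega
      have e2 : m + p + (j+1) = (m + p + j) + 1 := by omega
      rw [e1, e2, bsucc, bsucc, ih]
  have perN : ∀ c j, b (m + j) = b (m + j + c*p) := by
    intro c
    induction c with
    | zero => intro j; simp
    | succ c ih =>
      intro j
      have e : m + j + (c+1)*p = m + p + (j + c*p) := by ring
      rw [e, ← det (j + c*p)]
      have e2 : m + (j + c*p) = m + j + c*p := by omega
      rw [e2, ← ih j]
  obtain ⟨q, hq⟩ : ∃ q, q = (m+1)*p := ⟨_, rfl⟩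
  have hmq : m + 1 ≤ q := by
    rw [hq]
    calc m + 1 = (m+1)*1 := by ring
    _ ≤ (m+1)*p := Nat.mul_le_mul_left _ hppos
  set k := q - 1 with hk
  have hkm : m ≤ k := by omega
  have hk1 : k + 1 = q := by omega
  have hper : b k = b (2*k+1) := by
    have h := perN (m+1) (k - m)
    rw [show m + (k - m) = k from by omega, ← hq] at h
    rw [show 2*k+1 = k + q from by omega]
    exact h
  have hRkk : M.rel RS.R (b k) (b k) := by
    have := Rb k
    rw [← hper] at this
    exact this
  rcases Nat.eq_zero_or_pos k with hk0 | hk0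
  · exact ⟨a0, b k, by rw [hk0]; exact hE, hRkk⟩
  · refine ⟨b (k-1), b k, ?_, hRkk⟩
    have := Eb (k-1)
    rw [show k - 1 + 1 = k from by omega] at this
    exact this
/-- `Chase(D,T)` is the infinite `E`-chain `a_0, a_1, …` with
exactly the extra atoms `R(a_i, a_{2i})`; in particular it does not satisfy
`∃x∃y (E(x,y) ∧ R(y,y))`. Yet every finite model of `T` and `D` satisfies
`∃x∃y (E(x,y) ∧ R(y,y))`. Hence `T` is not finitely controllable. -/
theorem stmt_18 :
    (∃ f : ℕ → Elem sig18 (Fin 2), Function.Injective f ∧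
      f 0 = Elem.base 0 ∧ f 1 = Elem.base 1 ∧
      chase T18 D18 =
        {g | ∃ i : ℕ, g = (RS.E, f i, f (i + 1))} ∪
        {g | ∃ i : ℕ, g = (RS.R, f i, f (2 * i))}) ∧
    (¬ ∃ x y : Elem sig18 (Fin 2),
      (RS.E, x, y) ∈ chase T18 D18 ∧ (RS.R, y, y) ∈ chase T18 D18) ∧
    (∀ M : TModel sig18, Finite M.Dom → M.satT T18 →
      ∀ ι : Fin 2 → M.Dom, M.rel RS.E (ι 0) (ι 1) → M.rel RS.R (ι 0) (ι 0) →
      ∃ x y : M.Dom, M.rel RS.E x y ∧ M.rel RS.R y y) := by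
  refine ⟨⟨ff, ff_inj, rfl, rfl, chase_eq⟩, no_query, ?_⟩
  intro M hfin hsat ι hE hR
  exact finite_model M hfin hsat (ι 0) (ι 1) hE hR
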